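/- Define f_{T,M|X}(t, m | x) = f(t, x, m)/f_X(x). Then for every measurable function v : ℝ^{r₁} × ℝ^{r₂} → ℝ such that both sides below are integrable, E[ (1 − T) · ( f_{M|T,X}(M|1,X) / f_{T,M|X}(0, M | X) ) · v(X, M) ] = E[ T · v(X, M) / f_{T|X}(1|X) ]. -/

import Mathlib

open MeasureTheory ProbabilityTheory

private lemma key_alg (a b I F w : ℝ) (hb : b ≠ 0) :
    b * (a / I / (b / F) * w) = a * (w / (I / F)) := by
  field_simp

theorem control_weighting_identity
    {Ω : Type*} [MeasurableSpace Ω] (P : Measure Ω) [IsProbabilityMeasure P]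
    (r₁ r₂ : ℕ)
    (T : Ω → Bool) (X : Ω → (Fin r₁ → ℝ)) (M : Ω → (Fin r₂ → ℝ))
    (hT : Measurable T) (hX : Measurable X) (hM : Measurable M)
    (f : Bool → (Fin r₁ → ℝ) → (Fin r₂ → ℝ) → ℝ)
    (hf_meas : Measurable (fun p : Bool × (Fin r₁ → ℝ) × (Fin r₂ → ℝ) => f p.1 p.2.1 p.2.2))
    (hf_pos : ∀ t x m, 0 < f t x m)
    (hlaw : P.map (fun ω => (T ω, X ω, M ω)) =
      ((Measure.count : Measure Bool).prod
        ((volume : Measure (Fin r₁ → ℝ)).prod (volume : Measure (Fin r₂ → ℝ)))).withDensity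
        (fun p => ENNReal.ofReal (f p.1 p.2.1 p.2.2)))
    -- conditional densities
    (fX : (Fin r₁ → ℝ) → ℝ)
    (hfX : ∀ x, fX x = (∫ m, f true x m) + (∫ m, f false x m))
    (fTX : Bool → (Fin r₁ → ℝ) → ℝ)
    (hfTX : ∀ t x, fTX t x = (∫ m, f t x m) / fX x)
    (fMTX : (Fin r₂ → ℝ) → Bool → (Fin r₁ → ℝ) → ℝ)
    (hfMTX : ∀ m t x, fMTX m t x = f t x m / (∫ m', f t x m'))
    (fTMX : Bool → (Fin r₂ → ℝ) → (Fin r₁ → ℝ) → ℝ)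
    (hfTMX : ∀ t m x, fTMX t m x = f t x m / fX x)
    -- the test function
    (v : (Fin r₁ → ℝ) → (Fin r₂ → ℝ) → ℝ) (hv : Measurable (Function.uncurry v))
    (hint1 : Integrable (fun ω =>
      if T ω then 0
      else fMTX (M ω) true (X ω) / fTMX false (M ω) (X ω) * v (X ω) (M ω)) P)
    (hint2 : Integrable (fun ω =>
      if T ω then v (X ω) (M ω) / fTX true (X ω) else 0) P) :
    ∫ ω, (if T ω then 0
        else fMTX (M ω) true (X ω) / fTMX false (M ω) (X ω) * v (X ω) (M ω)) ∂P
      = ∫ ω, (if T ω then v (X ω) (M ω) / fTX true (X ω) else 0) ∂P := by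
  classical
  set ν := ((volume : Measure (Fin r₁ → ℝ)).prod (volume : Measure (Fin r₂ → ℝ))) with hν
  set μ := (Measure.count : Measure Bool).prod ν with hμ
  have hZ : Measurable fun ω => (T ω, X ω, M ω) := hT.prodMk (hX.prodMk hM)
  -- measurability facts
  have hf_t : ∀ t, Measurable fun q : (Fin r₁ → ℝ) × (Fin r₂ → ℝ) => f t q.1 q.2 := fun t =>
    hf_meas.comp (measurable_const.prodMk measurable_id)
  have hI : ∀ t, Measurable fun x => ∫ m, f t x m := fun t => ((hf_t t).stronglyMeasurable.integral_prod_right').measurable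
  have hfXeq : fX = fun x => (∫ m, f true x m) + (∫ m, f false x m) := funext hfX
  have hfXm : Measurable fX := by rw [hfXeq]; exact (hI true).add (hI false)
  set g₁ : Bool × (Fin r₁ → ℝ) × (Fin r₂ → ℝ) → ℝ := fun p =>
    if p.1 then 0 else fMTX p.2.2 true p.2.1 / fTMX false p.2.2 p.2.1 * v p.2.1 p.2.2 with hg₁
  set g₂ : Bool × (Fin r₁ → ℝ) × (Fin r₂ → ℝ) → ℝ := fun p =>
    if p.1 then v p.2.1 p.2.2 / fTX true p.2.1 else 0 with hg₂
  have hsetm : MeasurableSet {p : Bool × (Fin r₁ → ℝ) × (Fin r₂ → ℝ) | p.1 = true} :=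
    measurable_fst (measurableSet_singleton true)
  have hvm : Measurable fun p : Bool × (Fin r₁ → ℝ) × (Fin r₂ → ℝ) => v p.2.1 p.2.2 :=
    hv.comp (measurable_snd.fst.prodMk measurable_snd.snd)
  have hftm : ∀ t, Measurable fun p : Bool × (Fin r₁ → ℝ) × (Fin r₂ → ℝ) => f t p.2.1 p.2.2 :=
    fun t => (hf_t t).comp measurable_snd
  have hg₁m : Measurable g₁ := by
    rw [hg₁]
    refine Measurable.ite hsetm measurable_const ?_
    have : (fun p : Bool × (Fin r₁ → ℝ) × (Fin r₂ → ℝ) =>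
        fMTX p.2.2 true p.2.1 / fTMX false p.2.2 p.2.1 * v p.2.1 p.2.2)
        = fun p => (f true p.2.1 p.2.2 / (∫ m', f true p.2.1 m'))
            / (f false p.2.1 p.2.2 / fX p.2.1) * v p.2.1 p.2.2 := by
      funext p; rw [hfMTX, hfTMX]
    rw [this]
    exact (((hftm true).div ((hI true).comp measurable_snd.fst)).div
      ((hftm false).div (hfXm.comp measurable_snd.fst))).mul hvm
  have hg₂m : Measurable g₂ := by
    rw [hg₂]
    refine Measurable.ite hsetm ?_ measurable_const
    have : (fun p : Bool × (Fin r₁ → ℝ) × (Fin r₂ → ℝ) => v p.2.1 p.2.2 / fTX true p.2.1)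
        = fun p => v p.2.1 p.2.2 / ((∫ m, f true p.2.1 m) / fX p.2.1) := by
      funext p; rw [hfTX]
    rw [this]
    exact hvm.div (((hI true).comp measurable_snd.fst).div (hfXm.comp measurable_snd.fst))
  -- density as NNReal
  set ρ : Bool × (Fin r₁ → ℝ) × (Fin r₂ → ℝ) → NNReal :=
    fun p => (f p.1 p.2.1 p.2.2).toNNReal with hρ
  have hρm : Measurable ρ := hf_meas.real_toNNReal
  have hdens : (fun p : Bool × (Fin r₁ → ℝ) × (Fin r₂ → ℝ) => ENNReal.ofReal (f p.1 p.2.1 p.2.2))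
      = fun p => (ρ p : ENNReal) := rfl
  have hsmul : ∀ (g : Bool × (Fin r₁ → ℝ) × (Fin r₂ → ℝ) → ℝ) p,
      ρ p • g p = f p.1 p.2.1 p.2.2 * g p := by
    intro g p
    rw [NNReal.smul_def, smul_eq_mul, hρ, Real.coe_toNNReal _ (hf_pos _ _ _).le]
  -- transfer integrals to μ
  have key : ∀ g : Bool × (Fin r₁ → ℝ) × (Fin r₂ → ℝ) → ℝ, Measurable g →
      Integrable (fun ω => g (T ω, X ω, M ω)) P →
      (∫ ω, g (T ω, X ω, M ω) ∂P
        = ∑ t : Bool, ∫ y : (Fin r₁ → ℝ) × (Fin r₂ → ℝ), f t y.1 y.2 * g (t, y) ∂ν) := by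
    intro g hgm hgint
    have h1 : ∫ ω, g (T ω, X ω, M ω) ∂P = ∫ p, g p ∂(P.map fun ω => (T ω, X ω, M ω)) :=
      (integral_map hZ.aemeasurable (hgm.aestronglyMeasurable)).symm
    have hint' : Integrable g (P.map fun ω => (T ω, X ω, M ω)) :=
      (integrable_map_measure hgm.aestronglyMeasurable hZ.aemeasurable).mpr hgint
    rw [hlaw, hdens] at hint' h1
    rw [h1, integral_withDensity_eq_integral_smul hρm]
    have hint'' : Integrable (fun p => ρ p • g p) μ :=
      (integrable_withDensity_iff_integrable_smul hρm).mp hint'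
    have hfg : Integrable (fun p : Bool × ((Fin r₁ → ℝ) × (Fin r₂ → ℝ)) =>
        f p.1 p.2.1 p.2.2 * g p) μ := by
      exact hint''.congr (Filter.Eventually.of_forall fun p => hsmul g p)
    calc ∫ p, ρ p • g p ∂μ = ∫ p, f p.1 p.2.1 p.2.2 * g p ∂μ :=
          integral_congr_ae (Filter.Eventually.of_forall fun p => hsmul g p)
      _ = ∫ t : Bool, ∫ y, f t y.1 y.2 * g (t, y) ∂ν ∂(Measure.count : Measure Bool) :=
          integral_prod _ hfg
      _ = ∑ t : Bool, ((Measure.count : Measure Bool) {t}).toReal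
            • ∫ y, f t y.1 y.2 * g (t, y) ∂ν :=
          integral_fintype (hfg.integral_prod_left)
      _ = ∑ t : Bool, ∫ y, f t y.1 y.2 * g (t, y) ∂ν := by
          simp [Measure.count_singleton]
  have e₁ := key g₁ hg₁m hint1
  have e₂ := key g₂ hg₂m hint2
  rw [show (fun ω => if T ω then (0:ℝ)
      else fMTX (M ω) true (X ω) / fTMX false (M ω) (X ω) * v (X ω) (M ω))
      = fun ω => g₁ (T ω, X ω, M ω) from rfl] at e₁
  calc ∫ ω, (if T ω then (0:ℝ)
        else fMTX (M ω) true (X ω) / fTMX false (M ω) (X ω) * v (X ω) (M ω)) ∂P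
      = ∑ t : Bool, ∫ y : (Fin r₁ → ℝ) × (Fin r₂ → ℝ), f t y.1 y.2 * g₁ (t, y) ∂ν := e₁
    _ = ∑ t : Bool, ∫ y : (Fin r₁ → ℝ) × (Fin r₂ → ℝ), f t y.1 y.2 * g₂ (t, y) ∂ν := by
        have hzero₁ : ∫ y : (Fin r₁ → ℝ) × (Fin r₂ → ℝ), f true y.1 y.2 * g₁ (true, y) ∂ν = 0 := by
          simp [hg₁]
        have hzero₂ : ∫ y : (Fin r₁ → ℝ) × (Fin r₂ → ℝ), f false y.1 y.2 * g₂ (false, y) ∂ν = 0 := by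
          simp [hg₂]
        have hmain : ∫ y : (Fin r₁ → ℝ) × (Fin r₂ → ℝ), f false y.1 y.2 * g₁ (false, y) ∂ν
            = ∫ y : (Fin r₁ → ℝ) × (Fin r₂ → ℝ), f true y.1 y.2 * g₂ (true, y) ∂ν := by
          refine integral_congr_ae (Filter.Eventually.of_forall fun y => ?_)
          simp only [hg₁, hg₂, if_pos rfl, Bool.false_eq_true, if_neg, if_false]
          rw [hfMTX, hfTMX, hfTX]
          exact key_alg _ _ _ _ _ (hf_pos false y.1 y.2).ne'
        rw [Fintype.sum_bool, Fintype.sum_bool, hzero₁, hzero₂, zero_add, add_zero, hmain]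
    _ = ∫ ω, (if T ω then v (X ω) (M ω) / fTX true (X ω) else 0) ∂P := e₂.symm
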